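/- Let G be connected, γ ∈ (0,1), Q̄ = I − (γ/|E|)L, and P̄ = Q̄(I − (1/n)11ᵀ). Then ‖P̄‖₂ < 1, i.e., the spectral norm of the expected projected update matrix is strictly less than 1. -/

import Mathlib

set_option maxHeartbeats 1000000
set_option synthInstance.maxHeartbeats 400000

open Matrix BigOperators

lemma euclid_norm_sq {ι : Type*} [Fintype ι] (x : EuclideanSpace ℝ ι) :
    ‖x‖ ^ 2 = ∑ i, (x i) ^ 2 := by
  rw [EuclideanSpace.norm_eq, Real.sq_sqrt (by positivity)]
  simp [sq_abs]

lemma spectral_gap_aux {V E : Type*} [Fintype V] [Fintype E] [DecidableEq V] [Nonempty V]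
    (A : Matrix E V ℝ)
    (hconn : LinearMap.ker A.mulVecLin = Submodule.span ℝ {(fun _ => 1 : V → ℝ)}) :
    ∃ μ : ℝ, 0 < μ ∧ ∀ y : V → ℝ, (∑ v, y v) = 0 →
      μ * ∑ v, (y v) ^ 2 ≤ ∑ e, ((A *ᵥ y) e) ^ 2 := by
  classical
  let σ : EuclideanSpace ℝ V →ₗ[ℝ] ℝ :=
    { toFun := fun y => ∑ v, y v
      map_add' := by intro a b; simp [Finset.sum_add_distrib]
      map_smul' := by intro c a; simp [Finset.mul_sum] }
  let W : Submodule ℝ (EuclideanSpace ℝ V) := LinearMap.ker σ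
  let T : W →ₗ[ℝ] EuclideanSpace ℝ E :=
    { toFun := fun y => WithLp.toLp 2 (A.mulVec y.1)
      map_add' := by intro a b; simp [Matrix.mulVec_add]
      map_smul' := by intro c a; simp [Matrix.mulVec_smul] }
  have hTinj : Function.Injective T := by
    rw [← LinearMap.ker_eq_bot, eq_bot_iff]
    intro y hy
    have h0 : A *ᵥ (y.1 : V → ℝ) = 0 := by
      have := congrArg WithLp.ofLp (LinearMap.mem_ker.mp hy)
      simpa [T] using this
    have hker : (y.1 : V → ℝ) ∈ LinearMap.ker A.mulVecLin := by
      simpa [Matrix.mulVecLin_apply] using h0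
    rw [hconn, Submodule.mem_span_singleton] at hker
    obtain ⟨a, ha⟩ := hker
    have hsum : ∑ v, (y.1 : V → ℝ) v = 0 := y.2
    rw [← ha] at hsum
    have hsum' : (Fintype.card V : ℝ) * a = 0 := by
      simpa [Finset.sum_const, mul_comm] using hsum
    have hcard : (Fintype.card V : ℝ) ≠ 0 := by
      exact_mod_cast Fintype.card_ne_zero
    have ha0 : a = 0 := by
      rcases mul_eq_zero.mp hsum' with h | h
      · exact absurd h hcard
      · exact h
    have hy0 : (y.1 : V → ℝ) = 0 := by rw [← ha, ha0, zero_smul]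
    have : y = 0 := Subtype.ext (by simpa using congrArg (WithLp.toLp 2) hy0)
    simp [this]
  let eqv := LinearEquiv.ofInjective T hTinj
  let ceqv := eqv.toContinuousLinearEquiv
  set C : ℝ := ‖(ceqv.symm : ↥(LinearMap.range T) →L[ℝ] W)‖ with hC
  have hC0 : 0 ≤ C := hC ▸ norm_nonneg (ceqv.symm : ↥(LinearMap.range T) →L[ℝ] W)
  refine ⟨(C + 1)⁻¹ ^ 2, by positivity, ?_⟩
  intro y hy
  have hyW : (show EuclideanSpace ℝ V from WithLp.toLp 2 y) ∈ W := hy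
  set w : W := ⟨WithLp.toLp 2 y, hyW⟩ with hw
  have hnorm : ‖w‖ ≤ (C + 1) * ‖T w‖ := by
    have h1 : ‖w‖ = ‖ceqv.symm (ceqv w)‖ := by rw [ceqv.symm_apply_apply]
    have h2 : ‖ceqv.symm (ceqv w)‖ ≤ C * ‖ceqv w‖ :=
      (ceqv.symm : ↥(LinearMap.range T) →L[ℝ] W).le_opNorm _
    have h3 : ‖ceqv w‖ = ‖T w‖ := by
      have hc : ((ceqv w : ↥(LinearMap.range T)) : EuclideanSpace ℝ E) = T w := by
        have : ceqv w = eqv w := rfl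
        rw [this, LinearEquiv.ofInjective_apply]
      calc ‖ceqv w‖ = ‖((ceqv w : ↥(LinearMap.range T)) : EuclideanSpace ℝ E)‖ := rfl
        _ = ‖T w‖ := by rw [hc]
    calc ‖w‖ = ‖ceqv.symm (ceqv w)‖ := h1
      _ ≤ C * ‖ceqv w‖ := h2
      _ = C * ‖T w‖ := by rw [h3]
      _ ≤ (C + 1) * ‖T w‖ := by nlinarith [norm_nonneg (T w)]
  have hsq : ‖w‖ ^ 2 ≤ (C + 1) ^ 2 * ‖T w‖ ^ 2 := by
    nlinarith [norm_nonneg w, norm_nonneg (T w)]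
  have hwn : ‖w‖ ^ 2 = ∑ v, (y v) ^ 2 := by
    rw [show ‖w‖ = ‖(w : EuclideanSpace ℝ V)‖ from rfl]
    exact euclid_norm_sq _
  have hTn : ‖T w‖ ^ 2 = ∑ e, ((A *ᵥ y) e) ^ 2 := euclid_norm_sq _
  rw [← hwn, ← hTn]
  rw [inv_pow]
  rw [inv_mul_le_iff₀ (by positivity)]
  linarith [hsq]

/-- For a connected graph and `γ ∈ (0,1)`, with
`Q̄ = I − (γ/|E|)L` and `P̄ = Q̄(I − (1/n)11ᵀ)`, the spectral norm of `P̄` is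
strictly less than `1`: there is `ρ < 1` with `‖P̄x‖₂ ≤ ρ‖x‖₂` for all `x`. -/
theorem expected_projected_matrix_spectral_norm_lt_one
    {V E : Type*} [Fintype V] [Fintype E] [DecidableEq V] [Nonempty V]
    (head tail : E → V) (hht : ∀ e, head e ≠ tail e)
    (A : Matrix E V ℝ)
    (hA : ∀ e w, A e w = if w = head e then 1 else if w = tail e then -1 else 0)
    (hconn : LinearMap.ker A.mulVecLin = Submodule.span ℝ {(fun _ => 1 : V → ℝ)})
    (γ : ℝ) (hγ : γ ∈ Set.Ioo (0 : ℝ) 1)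
    (L Qbar Pbar : Matrix V V ℝ) (hL : L = Aᵀ * A)
    (hQbar : Qbar = 1 - (γ / (Fintype.card E : ℝ)) • L)
    (hPbar : Pbar = Qbar *
      (1 - ((Fintype.card V : ℝ))⁻¹ • vecMulVec (fun _ => 1) (fun _ => 1))) :
    ∃ ρ : ℝ, 0 ≤ ρ ∧ ρ < 1 ∧
      ∀ x : V → ℝ, ∑ v, (Pbar.mulVec x v) ^ 2 ≤ ρ ^ 2 * ∑ v, (x v) ^ 2 := by
  classical
  obtain ⟨hγ0, hγ1⟩ := hγ
  by_cases hV1 : Fintype.card V = 1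
  · -- one-vertex case: the projection matrix is zero
    have hsub : Subsingleton V := Fintype.card_le_one_iff_subsingleton.mp (by omega)
    have hproj : (1 - ((Fintype.card V : ℝ))⁻¹ • vecMulVec (fun _ => (1:ℝ)) (fun _ => (1:ℝ)))
        = (0 : Matrix V V ℝ) := by
      ext i j
      have hij : i = j := Subsingleton.elim i j
      simp [vecMulVec, hij, hV1, Matrix.one_apply]
    refine ⟨0, le_refl _, by norm_num, ?_⟩
    intro x
    simp [hPbar, hproj, Matrix.mul_zero, Matrix.zero_mulVec]
  -- main case
  have hn2 : 2 ≤ Fintype.card V := by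
    have := Fintype.card_pos (α := V); omega
  have hmE : 0 < Fintype.card E := by
    rcases Nat.eq_zero_or_pos (Fintype.card E) with h0 | h
    · exfalso
      have hEe : IsEmpty E := Fintype.card_eq_zero_iff.mp h0
      have hker : Submodule.span ℝ {(fun _ => 1 : V → ℝ)} = ⊤ := by
        rw [← hconn, eq_top_iff]
        intro y _
        rw [LinearMap.mem_ker]
        exact funext fun e => hEe.elim e
      have hle : Fintype.card V ≤ 1 := by
        calc Fintype.card V = Module.finrank ℝ (V → ℝ) := (Module.finrank_pi ℝ).symm
          _ = Module.finrank ℝ (⊤ : Submodule ℝ (V → ℝ)) := (finrank_top ℝ _).symm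
          _ = Module.finrank ℝ (Submodule.span ℝ {(fun _ => 1 : V → ℝ)}) := by rw [hker]
          _ ≤ 1 := by
              refine le_trans (finrank_span_le_card _) ?_
              simp
      omega
    · exact h
  -- basic row computations
  have hrowsq : ∀ e, ∑ v, (A e v) ^ 2 = 2 := by
    intro e
    have h : ∀ v, (A e v) ^ 2
        = (if v = head e then (1:ℝ) else 0) + (if v = tail e then (1:ℝ) else 0) := by
      intro v
      rw [hA]
      by_cases h1 : v = head e
      · subst h1; simp [hht e]
      · by_cases h2 : v = tail e <;> simp [h1, h2, Ne.symm (hht e)]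
    rw [Finset.sum_congr rfl fun v _ => h v, Finset.sum_add_distrib]
    simp
    norm_num
  -- setup constants
  set m : ℝ := (Fintype.card E : ℝ) with hmdef
  have hm0 : 0 < m := by rw [hmdef]; exact_mod_cast hmE
  set c : ℝ := γ / m with hcdef
  have hc0 : 0 < c := div_pos hγ0 hm0
  have hcm : c * m = γ := by rw [hcdef]; field_simp
  obtain ⟨μ₀, hμ₀, hgap⟩ := spectral_gap_aux A hconn
  set g : ℝ := 2 * c * (1 - γ) with hgdef
  have hg0 : 0 < g := by rw [hgdef]; nlinarith
  set μ : ℝ := min μ₀ (1 / (2 * g)) with hμdef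
  have hμpos : 0 < μ := lt_min hμ₀ (by positivity)
  have hgμ : g * μ ≤ 1 / 2 := by
    have h1 : μ ≤ 1 / (2 * g) := min_le_right _ _
    have h2 : g * μ ≤ g * (1 / (2 * g)) := by nlinarith
    have h3 : g * (1 / (2 * g)) = 1 / 2 := by field_simp
    linarith
  have hone : (0:ℝ) ≤ 1 - g * μ := by linarith
  refine ⟨Real.sqrt (1 - g * μ), Real.sqrt_nonneg _, ?_, ?_⟩
  · have h1 : 1 - g * μ < 1 := by nlinarith
    calc Real.sqrt (1 - g * μ) < Real.sqrt 1 := Real.sqrt_lt_sqrt hone h1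
      _ = 1 := Real.sqrt_one
  intro x
  have hrho : Real.sqrt (1 - g * μ) ^ 2 = 1 - g * μ := Real.sq_sqrt hone
  rw [hrho]
  -- projection
  have hn0 : ((Fintype.card V : ℝ)) ≠ 0 := by
    have : 0 < Fintype.card V := by omega
    exact_mod_cast this.ne'
  set s : ℝ := (∑ v, x v) / (Fintype.card V : ℝ) with hsdef
  set y : V → ℝ := fun v => x v - s with hydef
  have hsum_x : ∑ v, x v = (Fintype.card V : ℝ) * s := by
    rw [hsdef]; field_simp
  have hysum : ∑ v, y v = 0 := by
    rw [hydef]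
    rw [Finset.sum_sub_distrib, Finset.sum_const, Finset.card_univ, hsum_x]
    simp [mul_comm]
  have hPx : (1 - ((Fintype.card V : ℝ))⁻¹ • vecMulVec (fun _ => (1:ℝ)) (fun _ => (1:ℝ))) *ᵥ x
      = y := by
    funext v
    have hvmv : (vecMulVec (fun _ => (1:ℝ)) (fun _ => (1:ℝ)) *ᵥ x) v = ∑ w, x w := by
      simp [vecMulVec, Matrix.mulVec, dotProduct]
    rw [Matrix.sub_mulVec, Matrix.one_mulVec, Matrix.smul_mulVec]
    simp only [Pi.sub_apply, Pi.smul_apply, smul_eq_mul, hvmv]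
    rw [show y v = x v - s from rfl, hsdef, div_eq_inv_mul]
  have hproj : Pbar *ᵥ x = Qbar *ᵥ y := by
    rw [hPbar, ← Matrix.mulVec_mulVec, hPx]
  have hyx : ∑ v, (y v) ^ 2 ≤ ∑ v, (x v) ^ 2 := by
    have hexp : ∑ v, (y v) ^ 2
        = (∑ v, (x v) ^ 2) - (Fintype.card V : ℝ) * s ^ 2 := by
      have h : ∀ v, (y v) ^ 2 = (x v) ^ 2 - 2 * s * (x v) + s ^ 2 := by
        intro v; rw [hydef]; ring
      rw [Finset.sum_congr rfl fun v _ => h v, Finset.sum_add_distrib,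
        Finset.sum_sub_distrib, ← Finset.mul_sum, hsum_x, Finset.sum_const,
        Finset.card_univ]
      simp only [nsmul_eq_mul]
      ring
    have : 0 ≤ (Fintype.card V : ℝ) * s ^ 2 := by positivity
    linarith
  -- the key contraction bound
  have key : ∑ v, ((Qbar *ᵥ y) v) ^ 2 ≤ (1 - g * μ) * ∑ v, (y v) ^ 2 := by
    have hQy : ∀ v, (Qbar *ᵥ y) v = y v - c * (L *ᵥ y) v := by
      intro v
      rw [hQbar, Matrix.sub_mulVec, Matrix.one_mulVec, Matrix.smul_mulVec]
      simp [hcdef, hmdef]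
    have hdot : ∑ v, y v * (L *ᵥ y) v = ∑ e, ((A *ᵥ y) e) ^ 2 := by
      have h1 : y ⬝ᵥ (L *ᵥ y) = (A *ᵥ y) ⬝ᵥ (A *ᵥ y) := by
        rw [hL, ← Matrix.mulVec_mulVec, Matrix.dotProduct_mulVec, Matrix.vecMul_transpose]
      simpa [dotProduct, sq] using h1
    have hLv : ∀ v, (L *ᵥ y) v = ∑ e, A e v * (A *ᵥ y) e := by
      intro v
      rw [hL, ← Matrix.mulVec_mulVec]
      simp [Matrix.mulVec, dotProduct, Matrix.transpose_apply]
    have hLybound : ∑ v, ((L *ᵥ y) v) ^ 2 ≤ 2 * m * ∑ e, ((A *ᵥ y) e) ^ 2 := by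
      calc ∑ v, ((L *ᵥ y) v) ^ 2 = ∑ v, (∑ e, A e v * (A *ᵥ y) e) ^ 2 := by
            exact Finset.sum_congr rfl fun v _ => by rw [hLv v]
        _ ≤ ∑ v : V, (∑ e, (A e v) ^ 2) * (∑ e, ((A *ᵥ y) e) ^ 2) := by
            exact Finset.sum_le_sum fun v _ =>
              Finset.sum_mul_sq_le_sq_mul_sq _ _ _
        _ = (∑ v, ∑ e, (A e v) ^ 2) * (∑ e, ((A *ᵥ y) e) ^ 2) := by
            rw [Finset.sum_mul]
        _ = 2 * m * ∑ e, ((A *ᵥ y) e) ^ 2 := by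
            rw [Finset.sum_comm]
            congr 1
            rw [Finset.sum_congr rfl fun e _ => hrowsq e, Finset.sum_const,
              Finset.card_univ]
            simp [hmdef]
            ring
    have hz_ge : μ * ∑ v, (y v) ^ 2 ≤ ∑ e, ((A *ᵥ y) e) ^ 2 := by
      have h1 : μ * ∑ v, (y v) ^ 2 ≤ μ₀ * ∑ v, (y v) ^ 2 := by
        have : μ ≤ μ₀ := min_le_left _ _
        have hSy : 0 ≤ ∑ v, (y v) ^ 2 := by positivity
        nlinarith
      exact le_trans h1 (hgap y hysum)
    have expand : ∑ v, ((Qbar *ᵥ y) v) ^ 2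
        = (∑ v, (y v) ^ 2) - 2 * c * (∑ v, y v * (L *ᵥ y) v)
          + c ^ 2 * (∑ v, ((L *ᵥ y) v) ^ 2) := by
      have h : ∀ v, ((Qbar *ᵥ y) v) ^ 2
          = (y v) ^ 2 - 2 * c * (y v * (L *ᵥ y) v) + c ^ 2 * ((L *ᵥ y) v) ^ 2 := by
        intro v; rw [hQy v]; ring
      rw [Finset.sum_congr rfl fun v _ => h v, Finset.sum_add_distrib,
        Finset.sum_sub_distrib, ← Finset.mul_sum, ← Finset.mul_sum]
    set Sy : ℝ := ∑ v, (y v) ^ 2 with hSydef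
    set Z : ℝ := ∑ e, ((A *ᵥ y) e) ^ 2 with hZdef
    have t1 : c ^ 2 * (∑ v, ((L *ᵥ y) v) ^ 2) ≤ c ^ 2 * (2 * m * Z) :=
      mul_le_mul_of_nonneg_left hLybound (sq_nonneg c)
    have t2 : g * (μ * Sy) ≤ g * Z := mul_le_mul_of_nonneg_left hz_ge hg0.le
    have t3 : c ^ 2 * (2 * m * Z) = (2 * c - g) * Z := by
      rw [hgdef, ← hcm]; ring
    have t5 : (1 - g * μ) * Sy = Sy - g * (μ * Sy) := by ring
    rw [expand, hdot, t5]
    linarith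
  rw [show (Pbar.mulVec x) = Pbar *ᵥ x from rfl, hproj]
  calc ∑ v, ((Qbar *ᵥ y) v) ^ 2 ≤ (1 - g * μ) * ∑ v, (y v) ^ 2 := key
    _ ≤ (1 - g * μ) * ∑ v, (x v) ^ 2 := mul_le_mul_of_nonneg_left hyx hone
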